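/- Let m > n be coprime positive integers of opposite parity and δ a positive integer, and consider the rational numbers R₁ = δ(m² + n²)² / (8mn), R₂ = δ(m² + n²)² / (4(m² − n²)), and L = δ(m² + n²)³ / (8mn(m² − n²)). Then all three of R₁, R₂, L are integers if and only if 8 * m * n * (m² − n²) divides δ. -/
import Mathlib


theorem integrality_iff_delta_divisible (m n δ : ℕ) (hn : 0 < n) (hmn : n < m)
    (hcop : Nat.gcd m n = 1) (hpar : (m + n) % 2 = 1) (hδ : 0 < δ) :
    ((∃ a : ℤ, (δ : ℚ) * ((m : ℚ) ^ 2 + (n : ℚ) ^ 2) ^ 2 / (8 * m * n) = a) ∧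
     (∃ b : ℤ, (δ : ℚ) * ((m : ℚ) ^ 2 + (n : ℚ) ^ 2) ^ 2 / (4 * ((m : ℚ) ^ 2 - (n : ℚ) ^ 2)) = b) ∧
     (∃ c : ℤ, (δ : ℚ) * ((m : ℚ) ^ 2 + (n : ℚ) ^ 2) ^ 3 /
        (8 * m * n * ((m : ℚ) ^ 2 - (n : ℚ) ^ 2)) = c)) ↔
    8 * m * n * (m ^ 2 - n ^ 2) ∣ δ := by
  have hm : 0 < m := hn.trans hmn
  have hcop' : Nat.Coprime m n := hcop
  have hn2m2 : n ^ 2 < m ^ 2 := Nat.pow_lt_pow_left hmn two_ne_zero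
  have hMQ : (m : ℚ) ≠ 0 := Nat.cast_ne_zero.mpr hm.ne'
  have hNQ : (n : ℚ) ≠ 0 := Nat.cast_ne_zero.mpr hn.ne'
  have hNltM : (n : ℚ) < m := by exact_mod_cast hmn
  have hDQ : (m : ℚ) ^ 2 - (n : ℚ) ^ 2 ≠ 0 := by
    have : (n : ℚ) ^ 2 < (m : ℚ) ^ 2 := by
      have h0 : (0 : ℚ) ≤ n := by positivity
      exact pow_lt_pow_left₀ hNltM h0 two_ne_zero
    linarith
  have hcast : ((m ^ 2 - n ^ 2 : ℕ) : ℚ) = (m : ℚ) ^ 2 - (n : ℚ) ^ 2 := by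
    push_cast [Nat.cast_sub hn2m2.le]; ring
  -- parity facts
  have hm2 : m ^ 2 % 2 = m % 2 := by
    rcases Nat.mod_two_eq_zero_or_one m with h | h <;> rw [Nat.pow_mod, h] <;> rfl
  have hn2 : n ^ 2 % 2 = n % 2 := by
    rcases Nat.mod_two_eq_zero_or_one n with h | h <;> rw [Nat.pow_mod, h] <;> rfl
  have hSodd : Odd (m ^ 2 + n ^ 2) := Nat.odd_iff.mpr (by omega)
  have hDodd : Odd (m ^ 2 - n ^ 2) := Nat.odd_iff.mpr (by omega)
  -- coprimality
  have hcopS : Nat.Coprime (m ^ 2 + n ^ 2) (8 * m * n * (m ^ 2 - n ^ 2)) := by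
    have hSm : Nat.Coprime (m ^ 2 + n ^ 2) m := by
      have h1 : Nat.Coprime (n ^ 2 + m * m) m :=
        (Nat.coprime_add_mul_left_left _ _ _).mpr ((Nat.coprime_comm.mp hcop').pow_left 2)
      have : m ^ 2 + n ^ 2 = n ^ 2 + m * m := by ring
      rwa [this]
    have hSn : Nat.Coprime (m ^ 2 + n ^ 2) n := by
      have h1 : Nat.Coprime (m ^ 2 + n * n) n :=
        (Nat.coprime_add_mul_left_left _ _ _).mpr (Nat.Coprime.pow_left 2 hcop')
      have : m ^ 2 + n ^ 2 = m ^ 2 + n * n := by ring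
      rwa [this]
    have hDn2 : Nat.Coprime (m ^ 2 - n ^ 2) (n ^ 2) := by
      have h1 : Nat.Coprime (m ^ 2) (n ^ 2) := hcop'.pow 2 2
      have h2 : m ^ 2 = (m ^ 2 - n ^ 2) + n ^ 2 := by omega
      rw [h2] at h1
      exact (Nat.coprime_add_self_left).mp h1
    have hSD : Nat.Coprime (m ^ 2 + n ^ 2) (m ^ 2 - n ^ 2) := by
      have h1 : m ^ 2 + n ^ 2 = n ^ 2 * 2 + (m ^ 2 - n ^ 2) := by omega
      rw [h1]
      exact (Nat.coprime_add_self_left).mpr (Nat.Coprime.mul hDn2.symm hDodd.coprime_two_left)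
    have hS8 : Nat.Coprime (m ^ 2 + n ^ 2) 8 := by
      have : (8 : ℕ) = 2 ^ 3 := by norm_num
      rw [this]
      exact Nat.Coprime.pow_right 3 hSodd.coprime_two_right
    exact ((hS8.mul_right hSm).mul_right hSn).mul_right hSD
  constructor
  · rintro ⟨-, -, c, hc⟩
    rw [div_eq_iff (by positivity)] at hc
    have hZ' : ((δ * (m ^ 2 + n ^ 2) ^ 3 : ℕ) : ℤ) =
        ((8 * m * n * (m ^ 2 - n ^ 2) : ℕ) : ℤ) * c := by
      have h2 : ((δ * (m ^ 2 + n ^ 2) ^ 3 : ℕ) : ℚ) =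
          ((8 * m * n * (m ^ 2 - n ^ 2) : ℕ) : ℚ) * c := by
        push_cast [Nat.cast_sub hn2m2.le]
        linarith [hc]
      exact_mod_cast h2
    have hdvdN : 8 * m * n * (m ^ 2 - n ^ 2) ∣ δ * (m ^ 2 + n ^ 2) ^ 3 :=
      Int.natCast_dvd_natCast.mp ⟨c, hZ'⟩
    exact (Nat.Coprime.pow_right 3 hcopS.symm).dvd_of_dvd_mul_right hdvdN
  · rintro ⟨k, hk⟩
    have hδQ : (δ : ℚ) = 8 * m * n * ((m : ℚ) ^ 2 - (n : ℚ) ^ 2) * k := by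
      rw [hk]; push_cast [Nat.cast_sub hn2m2.le]; ring
    refine ⟨⟨((m ^ 2 - n ^ 2 : ℕ) : ℤ) * k * ((m ^ 2 + n ^ 2 : ℕ) : ℤ) ^ 2, ?_⟩,
            ⟨2 * m * n * k * ((m ^ 2 + n ^ 2 : ℕ) : ℤ) ^ 2, ?_⟩,
            ⟨(k : ℤ) * ((m ^ 2 + n ^ 2 : ℕ) : ℤ) ^ 3, ?_⟩⟩ <;>
      rw [hδQ] <;> push_cast [hcast] <;> field_simp <;> ring
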